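/- arXiv:math-ph/0312055 — 2 statements merged into one kernel-verified Lean document; each statement's English description precedes it below -/
import Mathlib

section
/- For fixed α > 0 and a > 0, the function φ_a(κ) = (α/(4π)) ∫_{ℝ} e^{−2a√(p²+κ²)} / ((2√(p²+κ²) − α)·√(p²+κ²)) dp tends to 0 as κ → ∞ and tends to +∞ as κ → (α/2)⁺. -/
open Real MeasureTheory Set Filter Topology

noncomputable def sBeta (β κ : ℝ) : ℝ :=
  β + (1 / (2 * π)) * (Real.log (κ / 2) + Real.eulerMascheroniConstant)

noncomputable def phiA (α a κ : ℝ) : ℝ :=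
  (α / (4 * π)) * ∫ p : ℝ,
    Real.exp (-2 * a * Real.sqrt (p ^ 2 + κ ^ 2)) /
      ((2 * Real.sqrt (p ^ 2 + κ ^ 2) - α) * Real.sqrt (p ^ 2 + κ ^ 2))

noncomputable def phi0 (α κ : ℝ) : ℝ :=
  (α / (4 * π)) * ∫ p : ℝ,
    1 / ((2 * Real.sqrt (p ^ 2 + κ ^ 2) - α) * Real.sqrt (p ^ 2 + κ ^ 2))

noncomputable def besselK0 (x : ℝ) : ℝ := ∫ t in Set.Ioi (0:ℝ), Real.exp (-x * Real.cosh t)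

noncomputable def psiA (α a κ : ℝ) : ℝ :=
  (α / π) * ∫ p in Set.Ioi (0:ℝ),
    p * Real.exp (-2 * a * Real.sqrt (p ^ 2 + κ ^ 2)) /
      ((2 * Real.sqrt (p ^ 2 + κ ^ 2) - α) * Real.sqrt (p ^ 2 + κ ^ 2))

noncomputable def psiC (α a κ : ℝ) : ℝ :=
  (α / π) * ∫ t in Set.Ioi κ, Real.exp (-2 * t * a) / (2 * t - α)

set_option maxHeartbeats 1000000

lemma integrable_exp_neg_abs' {b : ℝ} (hb : 0 < b) :
    Integrable (fun x : ℝ => Real.exp (-b * |x|)) := by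
  set g : ℝ → ℝ := fun x => Real.exp (-b * |x|) with hgdef
  have h1 : IntegrableOn g (Ioi (0:ℝ)) := by
    refine (exp_neg_integrableOn_Ioi 0 hb).congr_fun ?_ measurableSet_Ioi
    intro x hx
    simp [g, abs_of_pos (mem_Ioi.mp hx)]
  have h1' : IntegrableOn g (Ici (0:ℝ)) := Iff.mpr integrableOn_Ici_iff_integrableOn_Ioi h1
  have h2 : Integrable ((Ici (0:ℝ)).indicator g) :=
    (integrable_indicator_iff measurableSet_Ici).mpr h1'
  have h3 := h2.comp_neg
  have h4 : (fun x : ℝ => (Ici (0:ℝ)).indicator g (-x)) = (Iic (0:ℝ)).indicator g := by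
    funext x
    by_cases hx : x ≤ 0
    · rw [indicator_of_mem (mem_Iic.mpr hx), indicator_of_mem (by simpa using hx)]
      simp [g]
    · rw [indicator_of_notMem (by simpa using hx), indicator_of_notMem (by simpa using hx)]
  rw [h4] at h3
  have h5 : IntegrableOn g (Iic 0) := (integrable_indicator_iff measurableSet_Iic).mp h3
  have h6 := h5.union h1
  rwa [Iic_union_Ioi, integrableOn_univ] at h6

variable {α a κ : ℝ}

lemma sqrt_ge_self (hκ : 0 ≤ κ) (p : ℝ) : κ ≤ Real.sqrt (p ^ 2 + κ ^ 2) := by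
  rw [show κ = Real.sqrt (κ ^ 2) by rw [Real.sqrt_sq hκ]]
  exact Real.sqrt_le_sqrt (by nlinarith [Real.sq_sqrt (by positivity : (0:ℝ) ≤ κ^2)])

lemma sqrt_ge_abs (κ p : ℝ) : |p| ≤ Real.sqrt (p ^ 2 + κ ^ 2) := by
  rw [← Real.sqrt_sq_eq_abs]
  exact Real.sqrt_le_sqrt (by nlinarith)

lemma F_nonneg (hα : 0 < α) (hκ : α / 2 < κ) (p : ℝ) :
    0 ≤ Real.exp (-2 * a * Real.sqrt (p ^ 2 + κ ^ 2)) /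
      ((2 * Real.sqrt (p ^ 2 + κ ^ 2) - α) * Real.sqrt (p ^ 2 + κ ^ 2)) := by
  have h1 : κ ≤ Real.sqrt (p ^ 2 + κ ^ 2) := sqrt_ge_self (by linarith) p
  exact div_nonneg (Real.exp_nonneg _) (mul_nonneg (by linarith) (by linarith))

lemma F_integrable (hα : 0 < α) (ha : 0 < a) (hκ : α / 2 < κ) :
    Integrable (fun p : ℝ => Real.exp (-2 * a * Real.sqrt (p ^ 2 + κ ^ 2)) /
      ((2 * Real.sqrt (p ^ 2 + κ ^ 2) - α) * Real.sqrt (p ^ 2 + κ ^ 2))) := by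
  have hκ0 : 0 < κ := by linarith
  have hden : ∀ p : ℝ, 0 < (2 * Real.sqrt (p ^ 2 + κ ^ 2) - α) * Real.sqrt (p ^ 2 + κ ^ 2) := by
    intro p
    have h1 : κ ≤ Real.sqrt (p ^ 2 + κ ^ 2) := sqrt_ge_self hκ0.le p
    exact mul_pos (by linarith) (by linarith)
  have hcont : Continuous (fun p : ℝ => Real.exp (-2 * a * Real.sqrt (p ^ 2 + κ ^ 2)) /
      ((2 * Real.sqrt (p ^ 2 + κ ^ 2) - α) * Real.sqrt (p ^ 2 + κ ^ 2))) := by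
    have hs : Continuous (fun p : ℝ => Real.sqrt (p ^ 2 + κ ^ 2)) :=
      Real.continuous_sqrt.comp ((continuous_pow 2).add continuous_const)
    exact (Real.continuous_exp.comp (continuous_const.mul hs)).div
      (((continuous_const.mul hs).sub continuous_const).mul hs) (fun p => (hden p).ne')
  have hg : Integrable (fun p : ℝ => ((2 * κ - α) * κ)⁻¹ * Real.exp (-(2 * a) * |p|)) := by
    exact (Integrable.const_mul (by
      have := integrable_exp_neg_abs' (b := 2 * a) (by linarith)
      exact this) _)
  refine hg.mono' hcont.aestronglyMeasurable (Filter.Eventually.of_forall fun p => ?_)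
  have h1 : κ ≤ Real.sqrt (p ^ 2 + κ ^ 2) := sqrt_ge_self hκ0.le p
  have h2 : |p| ≤ Real.sqrt (p ^ 2 + κ ^ 2) := sqrt_ge_abs κ p
  rw [Real.norm_of_nonneg (F_nonneg hα hκ p)]
  rw [div_eq_mul_inv, mul_comm]
  apply mul_le_mul
  · apply inv_anti₀ (mul_pos (by linarith) hκ0)
    apply mul_le_mul (by linarith) h1 hκ0.le (by linarith)
  · apply Real.exp_le_exp.mpr; nlinarith
  · exact Real.exp_nonneg _
  · exact inv_nonneg.mpr (mul_pos (by linarith) hκ0).le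


lemma part1 {α a : ℝ} (hα : 0 < α) (ha : 0 < a) :
    Tendsto (fun κ => phiA α a κ) atTop (𝓝 0) := by
  set J : ℝ := ∫ p : ℝ, Real.exp (-a * |p|) with hJ
  have hJint : Integrable (fun p : ℝ => Real.exp (-a * |p|)) := integrable_exp_neg_abs' ha
  have hπ : 0 < π := Real.pi_pos
  have hc1 : 0 ≤ α / (4 * π) := by positivity
  have key : ∀ κ : ℝ, max α 1 ≤ κ →
      phiA α a κ ≤ α / (4 * π) * J * Real.exp (-(a * κ)) ∧ 0 ≤ phiA α a κ := by
    intro κ hκ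
    have hκα : α ≤ κ := le_trans (le_max_left _ _) hκ
    have hκ1 : (1:ℝ) ≤ κ := le_trans (le_max_right _ _) hκ
    have hκ2 : α / 2 < κ := by linarith
    have hκ0 : 0 < κ := by linarith
    refine ⟨?_, mul_nonneg hc1 (integral_nonneg (F_nonneg hα hκ2))⟩
    unfold phiA
    have hmono : (∫ p : ℝ, Real.exp (-2 * a * Real.sqrt (p ^ 2 + κ ^ 2)) /
          ((2 * Real.sqrt (p ^ 2 + κ ^ 2) - α) * Real.sqrt (p ^ 2 + κ ^ 2)))
        ≤ ∫ p : ℝ, Real.exp (-(a * κ)) * Real.exp (-a * |p|) := by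
      refine integral_mono_of_nonneg (Filter.Eventually.of_forall (F_nonneg hα hκ2))
        (hJint.const_mul _) (Filter.Eventually.of_forall fun p => ?_)
      have h1 : κ ≤ Real.sqrt (p ^ 2 + κ ^ 2) := sqrt_ge_self hκ0.le p
      have h2 : |p| ≤ Real.sqrt (p ^ 2 + κ ^ 2) := sqrt_ge_abs κ p
      have hd : 1 ≤ (2 * Real.sqrt (p ^ 2 + κ ^ 2) - α) * Real.sqrt (p ^ 2 + κ ^ 2) := by
        nlinarith
      calc Real.exp (-2 * a * Real.sqrt (p ^ 2 + κ ^ 2)) /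
            ((2 * Real.sqrt (p ^ 2 + κ ^ 2) - α) * Real.sqrt (p ^ 2 + κ ^ 2))
          ≤ Real.exp (-2 * a * Real.sqrt (p ^ 2 + κ ^ 2)) :=
            div_le_self (Real.exp_nonneg _) hd
        _ ≤ Real.exp (-(a * κ)) * Real.exp (-a * |p|) := by
            rw [← Real.exp_add]
            apply Real.exp_le_exp.mpr
            nlinarith [abs_nonneg p]
    rw [MeasureTheory.integral_const_mul] at hmono
    calc α / (4 * π) * ∫ p : ℝ, Real.exp (-2 * a * Real.sqrt (p ^ 2 + κ ^ 2)) /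
            ((2 * Real.sqrt (p ^ 2 + κ ^ 2) - α) * Real.sqrt (p ^ 2 + κ ^ 2))
        ≤ α / (4 * π) * (Real.exp (-(a * κ)) * J) := mul_le_mul_of_nonneg_left hmono hc1
      _ = α / (4 * π) * J * Real.exp (-(a * κ)) := by ring
  have hb : Tendsto (fun κ => α / (4 * π) * J * Real.exp (-(a * κ))) atTop (𝓝 0) := by
    have h1 : Tendsto (fun κ : ℝ => a * κ) atTop atTop :=
      Tendsto.const_mul_atTop ha tendsto_id
    have h2 : Tendsto (fun κ : ℝ => Real.exp (-(a * κ))) atTop (𝓝 0) :=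
      Real.tendsto_exp_neg_atTop_nhds_zero.comp h1
    simpa using h2.const_mul (α / (4 * π) * J)
  refine tendsto_of_tendsto_of_tendsto_of_le_of_le' tendsto_const_nhds hb ?_ ?_
  · filter_upwards [eventually_ge_atTop (max α 1)] with κ hκ using (key κ hκ).2
  · filter_upwards [eventually_ge_atTop (max α 1)] with κ hκ using (key κ hκ).1

lemma part2 {α a : ℝ} (hα : 0 < α) (ha : 0 < a) :
    Tendsto (fun κ => phiA α a κ) (𝓝[>] (α / 2)) atTop := by
  have hπ := Real.pi_pos
  set M : ℝ := Real.sqrt (1 + (α / 2 + 1) ^ 2) with hM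
  have hM1 : 1 ≤ M := by
    rw [hM, show (1:ℝ) = Real.sqrt 1 by rw [Real.sqrt_one]]
    exact Real.sqrt_le_sqrt (by nlinarith [Real.sqrt_one])
  have hM0 : 0 < M := by linarith
  set C0 : ℝ := 2 / α + 1 with hC0def
  have hC0 : 0 < C0 := by positivity
  set K : ℝ := α / (4 * π) * (2 * Real.exp (-(2 * a * M)) / (C0 * M)) with hK
  have hK0 : 0 < K := by positivity
  have key : ∀ κ ∈ Ioo (α / 2) (α / 2 + 1 / 2),
      K * (Real.sqrt (2 * κ - α))⁻¹ ≤ phiA α a κ := by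
    rintro κ ⟨hκ1, hκ2⟩
    have hε0 : (0:ℝ) < 2 * κ - α := by linarith
    have hε1 : 2 * κ - α < 1 := by linarith
    set δ : ℝ := Real.sqrt (2 * κ - α) with hδ
    have hδ0 : 0 < δ := Real.sqrt_pos.mpr hε0
    have hδ2 : δ ^ 2 = 2 * κ - α := Real.sq_sqrt hε0.le
    have hδ1 : δ ≤ 1 := by nlinarith
    have hκ0 : 0 < κ := by linarith
    have hInt := F_integrable hα ha hκ1 (a := a)
    have hpt : ∀ p ∈ Icc (-δ) δ,
        Real.exp (-(2 * a * M)) / (C0 * (2 * κ - α) * M) ≤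
          Real.exp (-2 * a * Real.sqrt (p ^ 2 + κ ^ 2)) /
            ((2 * Real.sqrt (p ^ 2 + κ ^ 2) - α) * Real.sqrt (p ^ 2 + κ ^ 2)) := by
      rintro p ⟨hp1, hp2⟩
      have hpabs : |p| ≤ δ := abs_le.mpr ⟨hp1, hp2⟩
      have hp2' : p ^ 2 ≤ 2 * κ - α := by nlinarith [sq_abs p, abs_nonneg p]
      set s : ℝ := Real.sqrt (p ^ 2 + κ ^ 2) with hs
      have hs1 : κ ≤ s := sqrt_ge_self hκ0.le p
      have hs2 : s ^ 2 = p ^ 2 + κ ^ 2 := Real.sq_sqrt (by positivity)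
      have hsM : s ≤ M := Real.sqrt_le_sqrt (by nlinarith)
      have hds : 0 < 2 * s - α := by linarith
      have hup : 2 * s - α ≤ C0 * (2 * κ - α) := by
        have hmul : (s - κ) * α ≤ (s - κ) * (s + κ) :=
          mul_le_mul_of_nonneg_left (by linarith) (by linarith)
        have hsk : (s - κ) * (s + κ) = p ^ 2 := by linear_combination hs2
        have h1 : α * (2 * s - α) ≤ (2 + α) * (2 * κ - α) := by nlinarith [hmul, hsk, hp2']
        have h2 : C0 * (2 * κ - α) = (2 + α) * (2 * κ - α) / α := by
          field_simp [hC0def]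
          rw [hC0def, div_add_one hα.ne', div_mul_cancel₀ _ hα.ne']
        rw [h2, le_div_iff₀ hα]
        nlinarith
      have hdenle : (2 * s - α) * s ≤ C0 * (2 * κ - α) * M :=
        mul_le_mul hup hsM (by linarith) (by positivity)
      exact div_le_div₀ (Real.exp_nonneg _)
        (Real.exp_le_exp.mpr (by nlinarith)) (mul_pos hds (by linarith)) hdenle
    have hIcc : IntegrableOn (fun p : ℝ => Real.exp (-2 * a * Real.sqrt (p ^ 2 + κ ^ 2)) /
        ((2 * Real.sqrt (p ^ 2 + κ ^ 2) - α) * Real.sqrt (p ^ 2 + κ ^ 2)))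
        (Icc (-δ) δ) := hInt.integrableOn
    have h1 : (∫ _p in Icc (-δ) δ, Real.exp (-(2 * a * M)) / (C0 * (2 * κ - α) * M)) ≤
        ∫ p in Icc (-δ) δ, Real.exp (-2 * a * Real.sqrt (p ^ 2 + κ ^ 2)) /
          ((2 * Real.sqrt (p ^ 2 + κ ^ 2) - α) * Real.sqrt (p ^ 2 + κ ^ 2)) :=
      setIntegral_mono_on (integrableOn_const measure_Icc_lt_top.ne) hIcc
        measurableSet_Icc hpt
    have h2 : (∫ p in Icc (-δ) δ, Real.exp (-2 * a * Real.sqrt (p ^ 2 + κ ^ 2)) /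
          ((2 * Real.sqrt (p ^ 2 + κ ^ 2) - α) * Real.sqrt (p ^ 2 + κ ^ 2))) ≤
        ∫ p : ℝ, Real.exp (-2 * a * Real.sqrt (p ^ 2 + κ ^ 2)) /
          ((2 * Real.sqrt (p ^ 2 + κ ^ 2) - α) * Real.sqrt (p ^ 2 + κ ^ 2)) :=
      setIntegral_le_integral hInt (Filter.Eventually.of_forall (F_nonneg hα hκ1))
    have h3 : (∫ _p in Icc (-δ) δ, Real.exp (-(2 * a * M)) / (C0 * (2 * κ - α) * M)) =
        2 * δ * (Real.exp (-(2 * a * M)) / (C0 * (2 * κ - α) * M)) := by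
      rw [setIntegral_const, Real.volume_real_Icc_of_le (by linarith)]
      rw [smul_eq_mul]; ring
    have h4 : 2 * δ * (Real.exp (-(2 * a * M)) / (C0 * (2 * κ - α) * M)) ≤
        ∫ p : ℝ, Real.exp (-2 * a * Real.sqrt (p ^ 2 + κ ^ 2)) /
          ((2 * Real.sqrt (p ^ 2 + κ ^ 2) - α) * Real.sqrt (p ^ 2 + κ ^ 2)) := by
      rw [← h3]; exact h1.trans h2
    have h5 : K * δ⁻¹ =
        α / (4 * π) * (2 * δ * (Real.exp (-(2 * a * M)) / (C0 * (2 * κ - α) * M))) := by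
      rw [hK, ← hδ2]
      field_simp
    rw [hδ] at h5
    rw [h5]
    unfold phiA
    exact mul_le_mul_of_nonneg_left h4 (by positivity)
  have hlow : Tendsto (fun κ => K * (Real.sqrt (2 * κ - α))⁻¹) (𝓝[>] (α / 2)) atTop := by
    have t1 : Tendsto (fun κ : ℝ => 2 * κ - α) (𝓝[>] (α / 2)) (𝓝[>] 0) := by
      rw [tendsto_nhdsWithin_iff]
      constructor
      · have hc : Continuous (fun κ : ℝ => 2 * κ - α) := by continuity
        have ht : Tendsto (fun κ : ℝ => 2 * κ - α) (𝓝[>] (α / 2)) (𝓝 (2 * (α / 2) - α)) :=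
          (hc.tendsto (α / 2)).mono_left nhdsWithin_le_nhds
        have h0 : 2 * (α / 2) - α = 0 := by ring
        rwa [h0] at ht
      · filter_upwards [self_mem_nhdsWithin] with κ hκ
        exact mem_Ioi.mpr (by simp only [mem_Ioi] at hκ; linarith)
    have t2 : Tendsto Real.sqrt (𝓝[>] (0:ℝ)) (𝓝[>] 0) := by
      rw [tendsto_nhdsWithin_iff]
      constructor
      · have ht : Tendsto Real.sqrt (𝓝[>] (0:ℝ)) (𝓝 (Real.sqrt 0)) :=
          (Real.continuous_sqrt.tendsto 0).mono_left nhdsWithin_le_nhds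
        rwa [Real.sqrt_zero] at ht
      · filter_upwards [self_mem_nhdsWithin] with x hx
        exact mem_Ioi.mpr (Real.sqrt_pos.mpr hx)
    exact (tendsto_inv_nhdsGT_zero.comp (t2.comp t1)).const_mul_atTop hK0
  refine tendsto_atTop_mono' _ ?_ hlow
  filter_upwards [Ioo_mem_nhdsGT_of_mem (show α / 2 ∈ Ico (α / 2) (α / 2 + 1 / 2) from ⟨le_refl _, by linarith⟩)] with κ hκ
  exact key κ hκ

set_option maxHeartbeats 1000000 in
theorem stmt4 (α a : ℝ) (hα : 0 < α) (ha : 0 < a) :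
    Tendsto (fun κ => phiA α a κ) atTop (𝓝 0) ∧
    Tendsto (fun κ => phiA α a κ) (𝓝[>] (α / 2)) atTop := by
  exact ⟨part1 hα ha, part2 hα ha⟩
end

section
/- Let α > 0, β ∈ ℝ. There exists a unique κ_0 ∈ (α/2, ∞) solving š_β(κ) = φ_0(κ), and for every a > 0 the unique solution κ_a of š_β(κ) = φ_a(κ) on (α/2,∞) satisfies κ_a < κ_0. Consequently −κ_0² is a lower bound for the eigenvalue −κ_a² for all a > 0, and −κ_a² → −κ_0² as a → 0⁺. -/
open Real MeasureTheory Set Filter Topology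

/-! ### Auxiliary development -/

/-- The integrand of `phiA`. -/
noncomputable def krI (α a κ : ℝ) : ℝ → ℝ := fun p =>
  Real.exp (-2 * a * Real.sqrt (p ^ 2 + κ ^ 2)) /
    ((2 * Real.sqrt (p ^ 2 + κ ^ 2) - α) * Real.sqrt (p ^ 2 + κ ^ 2))

lemma phiA_eq (α a κ : ℝ) : phiA α a κ = (α / (4 * π)) * ∫ p : ℝ, krI α a κ p := rfl

lemma phi0_eq (α κ : ℝ) : phi0 α κ = phiA α 0 κ := by
  simp [phi0, phiA]

section ptwise
variable {α a κ κ' p : ℝ}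

lemma kr_sqrt_pos (hκ : 0 < κ) : 0 < Real.sqrt (p ^ 2 + κ ^ 2) :=
  Real.sqrt_pos.mpr (by positivity)

lemma kr_le_sqrt (hκ : 0 < κ) : κ ≤ Real.sqrt (p ^ 2 + κ ^ 2) := by
  calc κ = Real.sqrt (κ ^ 2) := (Real.sqrt_sq hκ.le).symm
  _ ≤ _ := Real.sqrt_le_sqrt (by nlinarith)

lemma kr_denom_pos (hκ : α / 2 < κ) (hκ0 : 0 < κ) :
    0 < (2 * Real.sqrt (p ^ 2 + κ ^ 2) - α) * Real.sqrt (p ^ 2 + κ ^ 2) := by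
  have h1 := kr_sqrt_pos (p := p) hκ0
  have h2 := kr_le_sqrt (p := p) hκ0
  have : 0 < 2 * Real.sqrt (p ^ 2 + κ ^ 2) - α := by linarith
  positivity

lemma kr_denom_lb (hα : 0 ≤ α) (hκ : α / 2 < κ) (hκ0 : 0 < κ) :
    (2 * κ - α) / κ * (p ^ 2 + κ ^ 2) ≤
      (2 * Real.sqrt (p ^ 2 + κ ^ 2) - α) * Real.sqrt (p ^ 2 + κ ^ 2) := by
  set s := Real.sqrt (p ^ 2 + κ ^ 2) with hs
  have h1 : 0 < s := kr_sqrt_pos hκ0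
  have h2 : κ ≤ s := kr_le_sqrt hκ0
  have h3 : s ^ 2 = p ^ 2 + κ ^ 2 := Real.sq_sqrt (by positivity)
  rw [div_mul_eq_mul_div, div_le_iff₀ hκ0, ← h3]
  nlinarith [sq_nonneg s, mul_nonneg (mul_nonneg hα h1.le) (sub_nonneg.mpr h2)]

lemma kr_pos (hα : 0 < α) (hκ : α / 2 < κ) : 0 < krI α a κ p :=
  div_pos (Real.exp_pos _) (kr_denom_pos hκ (lt_of_le_of_lt (by linarith) hκ))

lemma kr_le_bound (hα : 0 < α) (hκ : α / 2 < κ) (ha : 0 ≤ a) :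
    krI α a κ p ≤ κ / (2 * κ - α) * (p ^ 2 + κ ^ 2)⁻¹ := by
  have hκ0 : 0 < κ := lt_of_le_of_lt (by linarith) hκ
  have hδ : 0 < 2 * κ - α := by linarith
  have hdp := kr_denom_pos (p := p) hκ hκ0
  have hlb := kr_denom_lb (p := p) hα.le hκ hκ0
  have hsp : (0:ℝ) < p ^ 2 + κ ^ 2 := by positivity
  have hexp : Real.exp (-2 * a * Real.sqrt (p ^ 2 + κ ^ 2)) ≤ 1 := by
    apply Real.exp_le_one_iff.mpr
    have := (kr_sqrt_pos (p := p) hκ0).le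
    nlinarith
  calc krI α a κ p
      ≤ 1 / ((2 * Real.sqrt (p ^ 2 + κ ^ 2) - α) * Real.sqrt (p ^ 2 + κ ^ 2)) := by
        unfold krI; gcongr
    _ ≤ 1 / ((2 * κ - α) / κ * (p ^ 2 + κ ^ 2)) := one_div_le_one_div_of_le (by positivity) hlb
    _ = κ / (2 * κ - α) * (p ^ 2 + κ ^ 2)⁻¹ := by field_simp

lemma integrable_inv_sq_add (hκ : 0 < κ) : Integrable fun p : ℝ => (p ^ 2 + κ ^ 2)⁻¹ := by
  have h := (integrable_inv_one_add_sq.comp_div (R := κ) hκ.ne').const_mul (κ ^ 2)⁻¹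
  refine h.congr (Eventually.of_forall fun p => ?_)
  have : (0:ℝ) < p ^ 2 + κ ^ 2 := by positivity
  field_simp
  ring

lemma integral_inv_sq_add (hκ : 0 < κ) : ∫ p : ℝ, (p ^ 2 + κ ^ 2)⁻¹ = π / κ := by
  have h1 : ∀ p : ℝ, (p ^ 2 + κ ^ 2)⁻¹ = (κ ^ 2)⁻¹ * (1 + (p / κ) ^ 2)⁻¹ := by
    intro p
    have : (0:ℝ) < p ^ 2 + κ ^ 2 := by positivity
    field_simp
    ring
  simp_rw [h1]
  rw [integral_const_mul, MeasureTheory.Measure.integral_comp_div (fun y => (1 + y ^ 2)⁻¹) κ,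
    integral_univ_inv_one_add_sq, abs_of_pos hκ, smul_eq_mul]
  field_simp

lemma kr_continuous (hα : 0 < α) (hκ : α / 2 < κ) : Continuous (krI α a κ) := by
  have hκ0 : 0 < κ := lt_of_le_of_lt (by linarith) hκ
  exact Continuous.div (by fun_prop) (by fun_prop) fun p => (kr_denom_pos hκ hκ0).ne'

lemma kr_integrable (hα : 0 < α) (hκ : α / 2 < κ) (ha : 0 ≤ a) :
    Integrable (krI α a κ) := by
  have hκ0 : 0 < κ := lt_of_le_of_lt (by linarith) hκ
  refine Integrable.mono' ((integrable_inv_sq_add hκ0).const_mul (κ / (2 * κ - α)))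
    (kr_continuous hα hκ).aestronglyMeasurable (Eventually.of_forall fun p => ?_)
  rw [Real.norm_eq_abs, abs_of_pos (kr_pos hα hκ)]
  exact kr_le_bound hα hκ ha

lemma kr_anti (hα : 0 < α) (hκ : α / 2 < κ) (hκκ' : κ ≤ κ') (ha : 0 ≤ a) :
    krI α a κ' p ≤ krI α a κ p := by
  have hκ0 : 0 < κ := lt_of_le_of_lt (by linarith) hκ
  have hκ'0 : 0 < κ' := lt_of_lt_of_le hκ0 hκκ'
  have hκ' : α / 2 < κ' := lt_of_lt_of_le hκ hκκ'
  have hss : Real.sqrt (p ^ 2 + κ ^ 2) ≤ Real.sqrt (p ^ 2 + κ' ^ 2) :=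
    Real.sqrt_le_sqrt (by nlinarith)
  have h1 := kr_sqrt_pos (p := p) hκ0
  have h2 := kr_le_sqrt (p := p) hκ0
  have hd := kr_denom_pos (p := p) hκ hκ0
  have hd' : (2 * Real.sqrt (p ^ 2 + κ ^ 2) - α) * Real.sqrt (p ^ 2 + κ ^ 2) ≤
      (2 * Real.sqrt (p ^ 2 + κ' ^ 2) - α) * Real.sqrt (p ^ 2 + κ' ^ 2) := by
    apply mul_le_mul (by linarith) hss h1.le (by linarith)
  have hnum : Real.exp (-2 * a * Real.sqrt (p ^ 2 + κ' ^ 2)) ≤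
      Real.exp (-2 * a * Real.sqrt (p ^ 2 + κ ^ 2)) :=
    Real.exp_le_exp.mpr (by nlinarith)
  exact div_le_div₀ (Real.exp_pos _).le hnum hd hd'

lemma kr_strict_anti0 (hα : 0 < α) (hκ : α / 2 < κ) (hκκ' : κ < κ') :
    krI α 0 κ' p < krI α 0 κ p := by
  have hκ0 : 0 < κ := lt_of_le_of_lt (by linarith) hκ
  have hκ'0 : 0 < κ' := lt_trans hκ0 hκκ'
  have hκ' : α / 2 < κ' := lt_trans hκ hκκ'
  have hss : Real.sqrt (p ^ 2 + κ ^ 2) < Real.sqrt (p ^ 2 + κ' ^ 2) :=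
    Real.sqrt_lt_sqrt (by positivity) (by nlinarith)
  have h1 := kr_sqrt_pos (p := p) hκ0
  have h2 := kr_le_sqrt (p := p) hκ0
  have hd := kr_denom_pos (p := p) hκ hκ0
  have hd' : (2 * Real.sqrt (p ^ 2 + κ ^ 2) - α) * Real.sqrt (p ^ 2 + κ ^ 2) <
      (2 * Real.sqrt (p ^ 2 + κ' ^ 2) - α) * Real.sqrt (p ^ 2 + κ' ^ 2) := by
    apply mul_lt_mul' (by linarith) hss h1.le (by linarith)
  unfold krI
  simp only [neg_mul, mul_zero, zero_mul, neg_zero, Real.exp_zero]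
  exact one_div_lt_one_div_of_lt hd hd'

lemma kr_lt_kr0 (hα : 0 < α) (hκ : α / 2 < κ) (ha : 0 < a) :
    krI α a κ p < krI α 0 κ p := by
  have hκ0 : 0 < κ := lt_of_le_of_lt (by linarith) hκ
  have h1 := kr_sqrt_pos (p := p) hκ0
  have hd := kr_denom_pos (p := p) hκ hκ0
  have hnum : Real.exp (-2 * a * Real.sqrt (p ^ 2 + κ ^ 2)) < 1 := by
    rw [← Real.exp_zero]
    apply Real.exp_lt_exp.mpr
    nlinarith
  unfold krI
  simp only [neg_mul, zero_mul, neg_zero, Real.exp_zero]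
  exact (div_lt_div_iff_of_pos_right hd).mpr (by simpa using hnum)

end ptwise

section intlevel
variable {α a κ κ' : ℝ}

lemma integral_strict_lt {f g : ℝ → ℝ} (hf : Integrable f) (hg : Integrable g)
    (h : ∀ p, f p < g p) : (∫ p, f p) < ∫ p, g p := by
  have hpos : 0 < ∫ p, (g p - f p) := by
    rw [integral_pos_iff_support_of_nonneg_ae
      (Eventually.of_forall fun p => sub_nonneg.mpr (h p).le) (hg.sub hf)]
    have hs : Function.support (fun p => g p - f p) = Set.univ := by
      ext p; simp [sub_ne_zero.mpr (h p).ne']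
    rw [hs, Real.volume_univ]
    exact ENNReal.zero_lt_top
  rw [integral_sub hg hf] at hpos
  linarith

lemma apos (hα : 0 < α) : 0 < α / (4 * π) := by positivity

lemma phiA_lt_phi0 (hα : 0 < α) (hκ : α / 2 < κ) (ha : 0 < a) :
    phiA α a κ < phi0 α κ := by
  rw [phi0_eq, phiA_eq, phiA_eq]
  exact mul_lt_mul_of_pos_left
    (integral_strict_lt (kr_integrable hα hκ ha.le) (kr_integrable hα hκ le_rfl)
      fun p => kr_lt_kr0 hα hκ ha) (apos hα)

lemma kr_le_kr0 (hα : 0 < α) (hκ : α / 2 < κ) (ha : 0 ≤ a) {p : ℝ} :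
    krI α a κ p ≤ krI α 0 κ p := by
  rcases ha.lt_or_eq with h | h
  · exact (kr_lt_kr0 hα hκ h).le
  · subst h; exact le_rfl

lemma phi0_strictAntiOn (hα : 0 < α) : StrictAntiOn (phi0 α) (Set.Ioi (α / 2)) := by
  intro x hx y hy hxy
  simp only [Set.mem_Ioi] at hx hy
  rw [phi0_eq, phi0_eq, phiA_eq, phiA_eq]
  exact mul_lt_mul_of_pos_left
    (integral_strict_lt (kr_integrable hα hy le_rfl) (kr_integrable hα hx le_rfl)
      fun p => kr_strict_anti0 hα hx hxy) (apos hα)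

lemma phi0_le (hα : 0 < α) (hκ : α / 2 < κ) : phi0 α κ ≤ α / (4 * (2 * κ - α)) := by
  have hκ0 : 0 < κ := lt_of_le_of_lt (by linarith) hκ
  have hδ : 0 < 2 * κ - α := by linarith
  have h1 : (∫ p : ℝ, krI α 0 κ p) ≤ ∫ p : ℝ, κ / (2 * κ - α) * (p ^ 2 + κ ^ 2)⁻¹ :=
    integral_mono (kr_integrable hα hκ le_rfl)
      ((integrable_inv_sq_add hκ0).const_mul _) fun p => kr_le_bound hα hκ le_rfl
  rw [integral_const_mul, integral_inv_sq_add hκ0] at h1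
  rw [phi0_eq, phiA_eq]
  calc (α / (4 * π)) * ∫ p : ℝ, krI α 0 κ p
      ≤ (α / (4 * π)) * (κ / (2 * κ - α) * (π / κ)) :=
        mul_le_mul_of_nonneg_left h1 (apos hα).le
    _ = α / (4 * (2 * κ - α)) := by field_simp

lemma phiA_continuousAt (hα : 0 < α) (ha : 0 ≤ a) (hκ : α / 2 < κ) :
    ContinuousAt (fun x => phiA α a x) κ := by
  have hκ0 : 0 < κ := lt_of_le_of_lt (by linarith) hκ
  set κ₁ := (α / 2 + κ) / 2 with hκ₁def
  have hκ₁ : α / 2 < κ₁ := by rw [hκ₁def]; linarith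
  have hκ₁κ : κ₁ < κ := by rw [hκ₁def]; linarith
  have hmem : Set.Ioi κ₁ ∈ 𝓝 κ := isOpen_Ioi.mem_nhds hκ₁κ
  simp_rw [phiA_eq]
  apply ContinuousAt.mul continuousAt_const
  apply continuousAt_of_dominated (bound := krI α 0 κ₁)
  · filter_upwards [hmem] with x hx
    exact (kr_continuous hα (hκ₁.trans hx)).aestronglyMeasurable
  · filter_upwards [hmem] with x hx
    apply Eventually.of_forall fun p => ?_
    rw [Real.norm_eq_abs, abs_of_pos (kr_pos hα (hκ₁.trans hx))]
    exact (kr_anti hα hκ₁ (le_of_lt hx) ha).trans (kr_le_kr0 hα hκ₁ ha)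
  · exact kr_integrable hα hκ₁ le_rfl
  · apply Eventually.of_forall fun p => ?_
    apply ContinuousAt.div (by fun_prop) (by fun_prop)
    exact (kr_denom_pos hκ hκ0).ne'

lemma phiA_tendsto_phi0 (hα : 0 < α) (hκ : α / 2 < κ) :
    Tendsto (fun a => phiA α a κ) (𝓝[>] (0:ℝ)) (𝓝 (phi0 α κ)) := by
  have hκ0 : 0 < κ := lt_of_le_of_lt (by linarith) hκ
  rw [phi0_eq, phiA_eq]
  simp_rw [phiA_eq]
  apply Tendsto.const_mul
  apply tendsto_integral_filter_of_dominated_convergence (bound := krI α 0 κ)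
  · filter_upwards [self_mem_nhdsWithin] with a (ha : (0:ℝ) < a)
    exact (kr_continuous hα hκ).aestronglyMeasurable
  · filter_upwards [self_mem_nhdsWithin] with a (ha : (0:ℝ) < a)
    apply Eventually.of_forall fun p => ?_
    rw [Real.norm_eq_abs, abs_of_pos (kr_pos hα hκ)]
    exact kr_le_kr0 hα hκ ha.le
  · exact kr_integrable hα hκ le_rfl
  · apply Eventually.of_forall fun p => ?_
    have hc : ContinuousAt (fun a : ℝ => krI α a κ p) 0 := by
      apply ContinuousAt.div (by fun_prop) continuousAt_const
      exact (kr_denom_pos hκ hκ0).ne'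
    exact hc.tendsto.mono_left nhdsWithin_le_nhds

lemma sBeta_strictMonoOn (β : ℝ) : StrictMonoOn (sBeta β) (Set.Ioi (0:ℝ)) := by
  intro x hx y hy hxy
  unfold sBeta
  have h : Real.log (x / 2) < Real.log (y / 2) :=
    Real.log_lt_log (by simpa using hx) (by linarith)
  have hπ : 0 < 1 / (2 * π) := by positivity
  nlinarith

lemma sBeta_tendsto_atTop (β : ℝ) : Tendsto (sBeta β) atTop atTop := by
  unfold sBeta
  apply tendsto_atTop_add_const_left
  apply Tendsto.const_mul_atTop (by positivity : (0:ℝ) < 1 / (2 * π))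
  apply tendsto_atTop_add_const_right
  exact Real.tendsto_log_atTop.comp (tendsto_id.atTop_div_const two_pos)

lemma sBeta_continuousAt (β : ℝ) (hκ : 0 < κ) : ContinuousAt (sBeta β) κ := by
  unfold sBeta
  have : ContinuousAt Real.log (κ / 2) := Real.continuousAt_log (by positivity)
  fun_prop (disch := positivity)

end intlevel
section blowup
variable {α : ℝ}

lemma log_integral (δ : ℝ) (hδ : 0 < δ) :
    ∫ x in (0:ℝ)..1, (2 * x + δ)⁻¹ = 1 / 2 * (Real.log (2 + δ) - Real.log δ) := by
  have hderiv : ∀ x ∈ Set.uIcc (0:ℝ) 1,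
      HasDerivAt (fun x => 1 / 2 * Real.log (2 * x + δ)) ((2 * x + δ)⁻¹) x := by
    intro x hx
    rw [Set.uIcc_of_le (by norm_num : (0:ℝ) ≤ 1)] at hx
    have hpos : 0 < 2 * x + δ := by have := hx.1; linarith
    have h1 : HasDerivAt (fun x : ℝ => 2 * x + δ) 2 x := by
      simpa using ((hasDerivAt_id x).const_mul 2).add_const δ
    have h2 := (Real.hasDerivAt_log hpos.ne').comp x h1
    have h3 := h2.const_mul (1 / 2 : ℝ)
    exact h3.congr_deriv (by field_simp)
  have hint : IntervalIntegrable (fun x : ℝ => (2 * x + δ)⁻¹) volume 0 1 := by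
    apply ContinuousOn.intervalIntegrable
    rw [Set.uIcc_of_le (by norm_num : (0:ℝ) ≤ 1)]
    apply ContinuousOn.inv₀ (by fun_prop)
    intro x hx
    have := hx.1
    have : 0 < 2 * x + δ := by linarith
    exact this.ne'
  rw [intervalIntegral.integral_eq_sub_of_hasDerivAt hderiv hint]
  norm_num
  ring

lemma phi0_blowup (hα : 0 < α) (M : ℝ) :
    ∃ κ, α / 2 < κ ∧ κ < α / 2 + 1 ∧ M < phi0 α κ := by
  set c1 := Real.sqrt (1 + (α / 2 + 1) ^ 2) with hc1def
  have hc1 : 0 < c1 := Real.sqrt_pos.mpr (by positivity)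
  set t := max 1 ((M + 1) * (8 * π * c1) / α) with htdef
  have ht1 : (1:ℝ) ≤ t := le_max_left _ _
  set δ := Real.exp (-t) with hδdef
  have hδ0 : 0 < δ := Real.exp_pos _
  have hδ1 : δ < 1 := by
    rw [hδdef, Real.exp_lt_one_iff]
    linarith
  set κ := (α + δ) / 2 with hκdef
  have hκgt : α / 2 < κ := by rw [hκdef]; linarith
  have hκlt : κ < α / 2 + 1 := by rw [hκdef]; linarith
  have hκ0 : 0 < κ := lt_of_le_of_lt (by linarith) hκgt
  have hδκ : 2 * κ - α = δ := by rw [hκdef]; ring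
  refine ⟨κ, hκgt, hκlt, ?_⟩
  -- pointwise lower bound on Ioc 0 1
  have hptwise : ∀ p ∈ Set.Ioc (0:ℝ) 1, c1⁻¹ * (2 * p + δ)⁻¹ ≤ krI α 0 κ p := by
    intro p hp
    obtain ⟨hp0, hp1⟩ := hp
    have hs0 := kr_sqrt_pos (p := p) hκ0
    have hsle : Real.sqrt (p ^ 2 + κ ^ 2) ≤ p + κ := by
      calc Real.sqrt (p ^ 2 + κ ^ 2) ≤ Real.sqrt ((p + κ) ^ 2) :=
            Real.sqrt_le_sqrt (by nlinarith)
        _ = p + κ := Real.sqrt_sq (by positivity)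
    have hsc1 : Real.sqrt (p ^ 2 + κ ^ 2) ≤ c1 := by
      rw [hc1def]
      apply Real.sqrt_le_sqrt
      nlinarith
    have hd := kr_denom_pos (p := p) hκgt hκ0
    have h2s : 0 < 2 * Real.sqrt (p ^ 2 + κ ^ 2) - α := by
      have := kr_le_sqrt (p := p) hκ0; linarith
    have hub : (2 * Real.sqrt (p ^ 2 + κ ^ 2) - α) * Real.sqrt (p ^ 2 + κ ^ 2) ≤
        (2 * p + δ) * c1 := by
      apply mul_le_mul (by linarith) hsc1 hs0.le (by positivity)
    unfold krI
    simp only [neg_mul, mul_zero, zero_mul, neg_zero, Real.exp_zero]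
    rw [← mul_inv]
    rw [one_div]
    apply inv_anti₀ hd
    linarith [hub]
  -- integrability of the lower bound on Ioc 0 1
  have hgint : IntegrableOn (fun p : ℝ => c1⁻¹ * (2 * p + δ)⁻¹) (Set.Ioc (0:ℝ) 1) := by
    apply IntegrableOn.mono_set _ Set.Ioc_subset_Icc_self
    apply ContinuousOn.integrableOn_Icc
    apply ContinuousOn.mul continuousOn_const
    apply ContinuousOn.inv₀ (by fun_prop)
    intro x hx
    have := hx.1
    have : 0 < 2 * x + δ := by linarith
    exact this.ne'
  have hkint := kr_integrable (a := 0) hα hκgt le_rfl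
  have hmono : (∫ p in Set.Ioc (0:ℝ) 1, c1⁻¹ * (2 * p + δ)⁻¹) ≤
      ∫ p in Set.Ioc (0:ℝ) 1, krI α 0 κ p :=
    setIntegral_mono_on hgint (hkint.integrableOn) measurableSet_Ioc hptwise
  have hsub : (∫ p in Set.Ioc (0:ℝ) 1, krI α 0 κ p) ≤ ∫ p : ℝ, krI α 0 κ p :=
    setIntegral_le_integral hkint (Eventually.of_forall fun p => (kr_pos hα hκgt).le)
  have hval : (∫ p in Set.Ioc (0:ℝ) 1, c1⁻¹ * (2 * p + δ)⁻¹) =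
      c1⁻¹ * (1 / 2 * (Real.log (2 + δ) - Real.log δ)) := by
    rw [← intervalIntegral.integral_of_le (by norm_num : (0:ℝ) ≤ 1),
      intervalIntegral.integral_const_mul, log_integral δ hδ0]
  have hlogδ : Real.log δ = -t := by rw [hδdef, Real.log_exp]
  have hlog2 : 0 < Real.log (2 + δ) := Real.log_pos (by linarith)
  -- final chain
  have hint_lb : c1⁻¹ * (1 / 2 * t) ≤ ∫ p : ℝ, krI α 0 κ p := by
    calc c1⁻¹ * (1 / 2 * t) ≤ c1⁻¹ * (1 / 2 * (Real.log (2 + δ) - Real.log δ)) := by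
          rw [hlogδ]
          apply mul_le_mul_of_nonneg_left _ (by positivity)
          nlinarith
      _ ≤ _ := hval ▸ (hmono.trans hsub)
  have hfinal : M + 1 ≤ phi0 α κ := by
    rw [phi0_eq, phiA_eq]
    have h1 : α / (4 * π) * (c1⁻¹ * (1 / 2 * t)) ≤ α / (4 * π) * ∫ p : ℝ, krI α 0 κ p :=
      mul_le_mul_of_nonneg_left hint_lb (apos hα).le
    have h2 : M + 1 ≤ α / (4 * π) * (c1⁻¹ * (1 / 2 * t)) := by
      have ht2 : (M + 1) * (8 * π * c1) / α ≤ t := le_max_right _ _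
      have hπ : 0 < π := Real.pi_pos
      rw [div_le_iff₀ hα] at ht2
      have heq : α / (4 * π) * (c1⁻¹ * (1 / 2 * t)) = t * α / (8 * π * c1) := by
        field_simp; ring
      rw [heq, le_div_iff₀ (by positivity)]
      linarith [ht2]
    linarith
  linarith

end blowup
section main

lemma phi0_continuousAt {α κ : ℝ} (hα : 0 < α) (hκ : α / 2 < κ) :
    ContinuousAt (phi0 α) κ := by
  have h := phiA_continuousAt (a := 0) hα le_rfl hκ
  simp only [← phi0_eq] at h
  exact h

lemma g_strictMonoOn {α : ℝ} (β : ℝ) (hα : 0 < α) :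
    StrictMonoOn (fun κ => sBeta β κ - phi0 α κ) (Set.Ioi (α / 2)) := by
  intro x hx y hy hxy
  simp only [Set.mem_Ioi] at hx hy
  have hx0 : (0:ℝ) < x := lt_of_le_of_lt (by linarith) hx
  have hy0 : (0:ℝ) < y := lt_of_le_of_lt (by linarith) hy
  have h1 : sBeta β x < sBeta β y := sBeta_strictMonoOn β hx0 hy0 hxy
  have h2 : phi0 α y < phi0 α x := phi0_strictAntiOn hα hx hy hxy
  dsimp only
  linarith

lemma exists_kappa0 {α : ℝ} (β : ℝ) (hα : 0 < α) :
    ∃ κ0, κ0 ∈ Set.Ioi (α / 2) ∧ sBeta β κ0 = phi0 α κ0 := by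
  obtain ⟨κn, hκn1, hκn2, hκn3⟩ := phi0_blowup hα (sBeta β (α / 2 + 1))
  have hκn0 : 0 < κn := lt_of_le_of_lt (by linarith) hκn1
  have hgn : sBeta β κn - phi0 α κn < 0 := by
    have : sBeta β κn < sBeta β (α / 2 + 1) :=
      sBeta_strictMonoOn β hκn0 (by simp only [Set.mem_Ioi]; linarith) hκn2
    linarith
  -- find κp with positive g
  have hev : ∀ᶠ κ in atTop, 1 / 4 < sBeta β κ := (sBeta_tendsto_atTop β).eventually_gt_atTop _
  obtain ⟨κp, hκp1, hκp2⟩ := (hev.and (eventually_ge_atTop (max α κn + 1))).exists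
  have hκpα : α ≤ κp := le_trans (le_trans (le_max_left _ _) (by linarith)) le_rfl
  have hκpn : κn < κp := lt_of_le_of_lt (le_max_right α κn) (by linarith)
  have hκpIoi : α / 2 < κp := by linarith
  have hgp : 0 < sBeta β κp - phi0 α κp := by
    have h1 : phi0 α κp ≤ α / (4 * (2 * κp - α)) := phi0_le hα hκpIoi
    have h2 : α / (4 * (2 * κp - α)) ≤ 1 / 4 := by
      rw [div_le_iff₀ (by nlinarith)]
      linarith
    linarith
  -- IVT
  have hsub : Set.Icc κn κp ⊆ Set.Ioi (α / 2) := fun x hx => lt_of_lt_of_le hκn1 hx.1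
  have hcont : ContinuousOn (fun κ => sBeta β κ - phi0 α κ) (Set.Icc κn κp) := by
    intro x hx
    have hx' : α / 2 < x := hsub hx
    exact (ContinuousAt.sub (sBeta_continuousAt β (by linarith))
      (phi0_continuousAt hα hx')).continuousWithinAt
  have h0 : (0:ℝ) ∈ Set.Icc (sBeta β κn - phi0 α κn) (sBeta β κp - phi0 α κp) :=
    ⟨hgn.le, hgp.le⟩
  obtain ⟨κ0, hκ0mem, hκ0⟩ := intermediate_value_Icc hκpn.le hcont h0
  exact ⟨κ0, hsub hκ0mem, by linarith [hκ0, sub_eq_zero.mp hκ0]⟩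

theorem stmt9' (α β : ℝ) (hα : 0 < α) (κ_ : ℝ → ℝ)
    (hκ : ∀ a : ℝ, 0 < a →
      κ_ a ∈ Set.Ioi (α / 2) ∧ sBeta β (κ_ a) = phiA α a (κ_ a) ∧
      ∀ κ' ∈ Set.Ioi (α / 2), sBeta β κ' = phiA α a κ' → κ' = κ_ a) :
    ∃ κ0 : ℝ, (κ0 ∈ Set.Ioi (α / 2) ∧ sBeta β κ0 = phi0 α κ0) ∧
      (∀ κ' ∈ Set.Ioi (α / 2), sBeta β κ' = phi0 α κ' → κ' = κ0) ∧
      (∀ a : ℝ, 0 < a → κ_ a < κ0) ∧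
      Tendsto (fun a => -(κ_ a) ^ 2) (𝓝[>] (0:ℝ)) (𝓝 (-κ0 ^ 2)) := by
  obtain ⟨κ0, hκ0mem, hκ0eq⟩ := exists_kappa0 β hα
  have hg := g_strictMonoOn β hα
  have huniq : ∀ κ' ∈ Set.Ioi (α / 2), sBeta β κ' = phi0 α κ' → κ' = κ0 := by
    intro κ' hκ' heq
    exact hg.injOn hκ' hκ0mem (show sBeta β κ' - phi0 α κ' = sBeta β κ0 - phi0 α κ0 by rw [sub_eq_zero.mpr heq, sub_eq_zero.mpr hκ0eq])
  have hlt : ∀ a : ℝ, 0 < a → κ_ a < κ0 := by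
    intro a ha
    obtain ⟨hmem, heq, _⟩ := hκ a ha
    have h1 : sBeta β (κ_ a) - phi0 α (κ_ a) < 0 := by
      have := phiA_lt_phi0 hα hmem ha
      linarith [heq]
    by_contra hcon
    push_neg at hcon
    rcases eq_or_lt_of_le hcon with h | h
    · rw [h] at hκ0eq
      linarith [sub_eq_zero.mpr hκ0eq]
    · have h2 : sBeta β κ0 - phi0 α κ0 < sBeta β (κ_ a) - phi0 α (κ_ a) := hg hκ0mem hmem h
      rw [sub_eq_zero.mpr hκ0eq] at h2
      linarith
  refine ⟨κ0, ⟨hκ0mem, hκ0eq⟩, huniq, hlt, ?_⟩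
  -- convergence
  have hT : Tendsto κ_ (𝓝[>] (0:ℝ)) (𝓝 κ0) := by
    rw [tendsto_order]
    constructor
    · intro x hx
      by_cases hxα : x ≤ α / 2
      · filter_upwards [self_mem_nhdsWithin] with a (ha : (0:ℝ) < a)
        exact lt_of_le_of_lt hxα (hκ a ha).1
      · push_neg at hxα
        have hxmem : x ∈ Set.Ioi (α / 2) := hxα
        have hgx : sBeta β x - phi0 α x < 0 := by
          have h2 : sBeta β x - phi0 α x < sBeta β κ0 - phi0 α κ0 := hg hxmem hκ0mem hx
          rw [sub_eq_zero.mpr hκ0eq] at h2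
          linarith
        have hev : ∀ᶠ a in 𝓝[>] (0:ℝ), sBeta β x < phiA α a x :=
          (phiA_tendsto_phi0 hα hxα).eventually (eventually_gt_nhds (by linarith))
        filter_upwards [hev, self_mem_nhdsWithin] with a h1 (ha : (0:ℝ) < a)
        by_contra hcon
        push_neg at hcon   -- κ_ a ≤ x
        obtain ⟨hmem, heq, huq⟩ := hκ a ha
        -- find κ2 > x with positive h_a
        have hev2 : ∀ᶠ κ in atTop, 1 / 4 < sBeta β κ :=
          (sBeta_tendsto_atTop β).eventually_gt_atTop _
        obtain ⟨κ2, hκ21, hκ22⟩ := (hev2.and (eventually_ge_atTop (max α x + 1))).exists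
        have hκ2α : α ≤ κ2 := le_trans (le_max_left _ _) (by linarith)
        have hκ2x : x < κ2 := lt_of_le_of_lt (le_max_right α x) (by linarith)
        have hκ2Ioi : α / 2 < κ2 := by linarith
        have hh2 : 0 < sBeta β κ2 - phiA α a κ2 := by
          have h1' : phiA α a κ2 < phi0 α κ2 := phiA_lt_phi0 hα hκ2Ioi ha
          have h2' : phi0 α κ2 ≤ α / (4 * (2 * κ2 - α)) := phi0_le hα hκ2Ioi
          have h3' : α / (4 * (2 * κ2 - α)) ≤ 1 / 4 := by
            rw [div_le_iff₀ (by nlinarith)]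
            linarith
          linarith
        have hhx : sBeta β x - phiA α a x < 0 := by linarith
        have hsub : Set.Icc x κ2 ⊆ Set.Ioi (α / 2) := fun y hy => lt_of_lt_of_le hxα hy.1
        have hcont : ContinuousOn (fun κ => sBeta β κ - phiA α a κ) (Set.Icc x κ2) := by
          intro y hy
          have hy' : α / 2 < y := hsub hy
          exact (ContinuousAt.sub (sBeta_continuousAt β (by linarith))
            (phiA_continuousAt hα ha.le hy')).continuousWithinAt
        obtain ⟨κ', hκ'mem, hκ'⟩ := intermediate_value_Icc hκ2x.le hcont ⟨hhx.le, hh2.le⟩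
        have hκ'0 : sBeta β κ' - phiA α a κ' = 0 := hκ'
        have hκ'eq : κ' = κ_ a := huq κ' (hsub hκ'mem) (by linarith [sub_eq_zero.mp hκ'0])
        have hκ'x : x < κ' := by
          rcases eq_or_lt_of_le hκ'mem.1 with h | h
          · exfalso; rw [← h] at hκ'0; linarith
          · exact h
        linarith [hκ'eq ▸ hκ'x]
    · intro x hx
      filter_upwards [self_mem_nhdsWithin] with a (ha : (0:ℝ) < a)
      exact lt_trans (hlt a ha) hx
  have hcont2 : Continuous fun y : ℝ => -y ^ 2 := by fun_prop
  exact (hcont2.tendsto κ0).comp hT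

end main

theorem stmt9 (α β : ℝ) (hα : 0 < α) (κ_ : ℝ → ℝ)
    (hκ : ∀ a : ℝ, 0 < a →
      κ_ a ∈ Set.Ioi (α / 2) ∧ sBeta β (κ_ a) = phiA α a (κ_ a) ∧
      ∀ κ' ∈ Set.Ioi (α / 2), sBeta β κ' = phiA α a κ' → κ' = κ_ a) :
    ∃ κ0 : ℝ, (κ0 ∈ Set.Ioi (α / 2) ∧ sBeta β κ0 = phi0 α κ0) ∧
      (∀ κ' ∈ Set.Ioi (α / 2), sBeta β κ' = phi0 α κ' → κ' = κ0) ∧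
      (∀ a : ℝ, 0 < a → κ_ a < κ0) ∧
      Tendsto (fun a => -(κ_ a) ^ 2) (𝓝[>] (0:ℝ)) (𝓝 (-κ0 ^ 2)) :=
  stmt9' α β hα κ_ hκ
end
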